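/- Let L > 0 and let ψ : [0, ∞) → [0, ∞) be a convex differentiable function with ψ(0) = 0 and ψ'(0) = 0 whose derivative ψ' is Lipschitz with constant L. Define the domain D = { z = (z₁, z₂) ∈ ℂ² : Re z₁ > ψ(|z₂|) }. Then for every x ≥ 0 with L·ψ(x) ≤ 1, the Euclidean distance from the point q = (ψ(x), 0) to the boundary ∂D equals ψ(x). -/

import Mathlib

open Set Metric

/-- Let `ψ : [0,∞) → [0,∞)` be convex and differentiable with `ψ(0) = 0`, `ψ'(0) = 0`
and `ψ'` Lipschitz with constant `L > 0`, and let
`D = { z ∈ ℂ² : Re z₁ > ψ(|z₂|) }`. Then for every `x ≥ 0` with `L·ψ(x) ≤ 1`, the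
Euclidean distance from `q = (ψ(x), 0)` to `∂D` equals `ψ(x)`. -/
theorem dist_to_boundary_of_model_domain
    (L : NNReal) (hL : 0 < L) (ψ ψ' : ℝ → ℝ)
    (hnonneg : ∀ x ∈ Ici (0 : ℝ), 0 ≤ ψ x)
    (hconv : ConvexOn ℝ (Ici 0) ψ)
    (hdiff : ∀ x ∈ Ici (0 : ℝ), HasDerivWithinAt ψ (ψ' x) (Ici 0) x)
    (hψ0 : ψ 0 = 0) (hψ'0 : ψ' 0 = 0)
    (hlip : LipschitzOnWith L ψ' (Ici 0)) :
    ∀ x : ℝ, 0 ≤ x → (L : ℝ) * ψ x ≤ 1 →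
      infDist ((WithLp.equiv 2 (Fin 2 → ℂ)).symm ![(ψ x : ℂ), 0])
        (frontier { z : EuclideanSpace ℂ (Fin 2) | ψ ‖z 1‖ < (z 0).re }) = ψ x := by
  intro x hx hLx
  set S : Set (EuclideanSpace ℂ (Fin 2)) := { z | ψ ‖z 1‖ < (z 0).re } with hS
  set a := ψ x with ha
  have ha0 : 0 ≤ a := hnonneg x hx
  set q : EuclideanSpace ℂ (Fin 2) := (WithLp.equiv 2 (Fin 2 → ℂ)).symm ![(a : ℂ), 0] with hq
  have hq0 : q 0 = (a : ℂ) := rfl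
  have hq1 : q 1 = 0 := rfl
  -- the origin is in the frontier of S
  have h0cl : (0 : EuclideanSpace ℂ (Fin 2)) ∈ closure S := by
    rw [Metric.mem_closure_iff]
    intro ε hε
    refine ⟨(WithLp.equiv 2 (Fin 2 → ℂ)).symm ![((ε/2 : ℝ) : ℂ), 0], ?_, ?_⟩
    · show ψ ‖(0 : ℂ)‖ < (((ε/2 : ℝ) : ℂ)).re
      simp [hψ0]
      linarith
    · rw [EuclideanSpace.dist_eq, Fin.sum_univ_two]
      have h1 : dist ((0 : EuclideanSpace ℂ (Fin 2)) 0) (((ε/2 : ℝ) : ℂ)) = ε/2 := by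
        have : ((0 : EuclideanSpace ℂ (Fin 2)) 0) = (0 : ℂ) := rfl
        rw [this, dist_comm, Complex.dist_eq, sub_zero, Complex.norm_real, Real.norm_eq_abs,
          abs_of_nonneg (by linarith : (0:ℝ) ≤ ε/2)]
      have h2 : dist ((0 : EuclideanSpace ℂ (Fin 2)) 1) (0 : ℂ) = 0 := by simp
      show Real.sqrt (dist ((0 : EuclideanSpace ℂ (Fin 2)) 0) (((ε/2 : ℝ) : ℂ)) ^ 2
        + dist ((0 : EuclideanSpace ℂ (Fin 2)) 1) (0 : ℂ) ^ 2) < ε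
      rw [h1, h2]
      rw [show (ε/2)^2 + (0:ℝ)^2 = (ε/2)^2 by ring, Real.sqrt_sq (by linarith)]
      linarith
  have h0ni : (0 : EuclideanSpace ℂ (Fin 2)) ∉ interior S := by
    intro h
    have h' : (0 : EuclideanSpace ℂ (Fin 2)) ∈ S := interior_subset h
    have : ψ ‖(0 : EuclideanSpace ℂ (Fin 2)) 1‖ < (((0 : EuclideanSpace ℂ (Fin 2)) 0)).re := h'
    simp [hψ0] at this
  have h0f : (0 : EuclideanSpace ℂ (Fin 2)) ∈ frontier S := ⟨h0cl, h0ni⟩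
  -- distance from q to 0 is a
  have hdq0 : dist q (0 : EuclideanSpace ℂ (Fin 2)) = a := by
    rw [EuclideanSpace.dist_eq, Fin.sum_univ_two]
    have h1 : dist (q 0) ((0 : EuclideanSpace ℂ (Fin 2)) 0) = a := by
      rw [hq0]; simp [Complex.dist_eq, abs_of_nonneg ha0]
    have h2 : dist (q 1) ((0 : EuclideanSpace ℂ (Fin 2)) 1) = 0 := by
      rw [hq1]; simp
    rw [h1, h2, show a^2 + (0:ℝ)^2 = a^2 by ring, Real.sqrt_sq ha0]
  -- upper bound
  have hub : infDist q (frontier S) ≤ a := by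
    calc infDist q (frontier S) ≤ dist q 0 := infDist_le_dist_of_mem h0f
    _ = a := hdq0
  -- quadratic bound : ψ t ≤ L t^2 / 2 on Ici 0
  have hψ'le : ∀ t ∈ Ici (0 : ℝ), ψ' t ≤ (L : ℝ) * t := by
    intro t ht
    have := hlip.dist_le_mul t ht 0 (by simp)
    rw [Real.dist_eq, Real.dist_eq, hψ'0, sub_zero, sub_zero] at this
    calc ψ' t ≤ |ψ' t| := le_abs_self _
    _ ≤ (L : ℝ) * |t| := this
    _ = (L : ℝ) * t := by rw [abs_of_nonneg ht]
  have hquad : ∀ t ∈ Ici (0 : ℝ), ψ t ≤ (L : ℝ) * t ^ 2 / 2 := by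
    intro t ht
    set g : ℝ → ℝ := fun s => (L : ℝ) * s ^ 2 / 2 - ψ s with hg
    have hgderiv : ∀ s ∈ interior (Ici (0 : ℝ)), HasDerivAt g ((L : ℝ) * s - ψ' s) s := by
      intro s hs
      rw [interior_Ici] at hs
      have hψs : HasDerivAt ψ (ψ' s) s :=
        (hdiff s (Set.mem_Ici.2 (le_of_lt (Set.mem_Ioi.1 hs)))).hasDerivAt (Ici_mem_nhds hs)
      have h1 : HasDerivAt (fun s : ℝ => (L : ℝ) * s ^ 2 / 2) ((L : ℝ) * s) s := by
        have := ((hasDerivAt_pow 2 s).const_mul ((L : ℝ))).div_const 2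
        simpa [mul_comm, mul_assoc, mul_div_assoc] using this
      exact h1.sub hψs
    have hmono : MonotoneOn g (Ici 0) := by
      apply monotoneOn_of_deriv_nonneg (convex_Ici 0)
      · exact ((continuous_const.mul (continuous_pow 2)).div_const 2).continuousOn.sub
          (fun s hs => (hdiff s hs).continuousWithinAt)
      · intro s hs
        exact (hgderiv s hs).differentiableAt.differentiableWithinAt
      · intro s hs
        rw [(hgderiv s hs).deriv]
        rw [interior_Ici] at hs
        have := hψ'le s (Set.mem_Ici.2 (le_of_lt (Set.mem_Ioi.1 hs)))
        linarith
    have := hmono (Set.mem_Ici.2 le_rfl) ht ht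
    simp only [hg, hψ0] at this
    simpa using this
  -- lower bound
  have hlb : a ≤ infDist q (frontier S) := by
    by_contra hcon
    push_neg at hcon
    obtain ⟨p, hp, hcon⟩ := (infDist_lt_iff ⟨0, h0f⟩).1 hcon
    -- dist q p < a, so p ∈ ball q a ⊆ S
    have hane : 0 < a := lt_of_le_of_lt dist_nonneg hcon
    have hball : Metric.ball q a ⊆ S := by
      intro z hz
      rw [Metric.mem_ball, EuclideanSpace.dist_eq, Fin.sum_univ_two] at hz
      have hsum : dist (z 0) (q 0) ^ 2 + dist (z 1) (q 1) ^ 2 < a ^ 2 := by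
        have hnn : 0 ≤ dist (z 0) (q 0) ^ 2 + dist (z 1) (q 1) ^ 2 := by positivity
        nlinarith [Real.sq_sqrt hnn, Real.sqrt_nonneg (dist (z 0) (q 0) ^ 2 + dist (z 1) (q 1) ^ 2)]
      rw [hq0, hq1] at hsum
      set u := (z 0).re with hu
      set t := ‖z 1‖ with htdef
      have ht0 : 0 ≤ t := norm_nonneg _
      have hre : (u - a) ^ 2 ≤ dist (z 0) ((a : ℂ)) ^ 2 := by
        have h1 : |u - a| ≤ ‖z 0 - (a : ℂ)‖ := by
          have := Complex.abs_re_le_norm (z 0 - (a : ℂ))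
          simpa [Complex.sub_re] using this
        have h2 : dist (z 0) ((a : ℂ)) = ‖z 0 - (a : ℂ)‖ := by rw [Complex.dist_eq]
        rw [h2]
        calc (u - a)^2 = |u - a|^2 := (sq_abs _).symm
        _ ≤ ‖z 0 - (a : ℂ)‖^2 := by nlinarith [abs_nonneg (u - a)]
      have hdist1 : dist (z 1) (0 : ℂ) = t := by simp [htdef]
      have hkey : (u - a) ^ 2 + t ^ 2 < a ^ 2 := by
        rw [hdist1] at hsum
        nlinarith
      have hψt : ψ t ≤ (L : ℝ) * t ^ 2 / 2 := hquad t ht0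
      show ψ t < u
      nlinarith [mul_le_mul_of_nonneg_right hLx (sq_nonneg t), sq_nonneg u,
        NNReal.coe_nonneg L, sq_nonneg (u - a)]
    have hint : p ∈ interior S := interior_maximal hball Metric.isOpen_ball
      (Metric.mem_ball.2 (by rwa [dist_comm] at hcon))
    exact hp.2 hint
  -- conclude
  exact le_antisymm hub hlb
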